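/- For n ≥ 3, let fₙ(θ) = secⁿ((θ−π)/n) sin θ on [0,π]. Then fₙ attains its maximum at θ* = ((n−2)/(n−1))·(π/2), and max fₙ = sec^{n−1}(π/(2(n−1))); consequently τₙ := cosⁿ(π/n)·max_{θ∈[0,π]} fₙ(θ) = cosⁿ(π/n) sec^{n−1}(π/(2(n−1))). -/

import Mathlib

open Real

lemma aux_deriv_simp (c s A B N : ℝ) (hc : c ≠ 0) (hN : N ≠ 0) (k : ℕ) :
    N * (c⁻¹)^(k+2) * (-(-s*(1/N))/c^2) * B + (c⁻¹)^(k+3) * A = (c⁻¹)^(k+3+1) * (A*c + B*s) := by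
  simp only [inv_pow]
  field_simp
  ring

set_option maxHeartbeats 1000000 in
theorem stmt_15 (n : ℕ) (hn : 3 ≤ n) :
    let f : ℝ → ℝ := fun θ => ((Real.cos ((θ - π) / n))⁻¹) ^ n * Real.sin θ
    let θstar : ℝ := (((n : ℝ) - 2) / ((n : ℝ) - 1)) * (π / 2)
    θstar ∈ Set.Icc 0 π ∧
      IsMaxOn f (Set.Icc 0 π) θstar ∧
      f θstar = ((Real.cos (π / (2 * ((n : ℝ) - 1))))⁻¹) ^ (n - 1) ∧
      Real.cos (π / n) ^ n * f θstar =
        Real.cos (π / n) ^ n * ((Real.cos (π / (2 * ((n : ℝ) - 1))))⁻¹) ^ (n - 1) := by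
  intro f θstar
  have hπ := Real.pi_pos
  have hm : (3:ℝ) ≤ (n:ℝ) := by exact_mod_cast hn
  have hm0 : (0:ℝ) < (n:ℝ) := by linarith
  have hne0 : ((n:ℝ)) ≠ 0 := ne_of_gt hm0
  have hn1 : ((n:ℝ)) - 1 ≠ 0 := by nlinarith
  have hθdef : θstar = (((n : ℝ) - 2) / ((n : ℝ) - 1)) * (π / 2) := rfl
  have hfdef : ∀ θ, f θ = ((Real.cos ((θ - π) / n))⁻¹) ^ n * Real.sin θ := fun _ => rfl
  -- positivity of the cosine
  have hcos : ∀ θ ∈ Set.Icc (0:ℝ) π, 0 < Real.cos ((θ - π) / n) := by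
    intro θ hθ
    apply Real.cos_pos_of_mem_Ioo
    constructor
    · rw [lt_div_iff₀ hm0]; nlinarith [hθ.1]
    · rw [div_lt_iff₀ hm0]; nlinarith [hθ.2]
  -- derivative formula
  have hderiv : ∀ θ ∈ Set.Icc (0:ℝ) π,
      HasDerivAt f (((Real.cos ((θ - π) / n))⁻¹) ^ (n+1) *
        Real.cos ((((n:ℝ) - 1) * θ + π) / n)) θ := by
    intro θ hθ
    have hc := hcos θ hθ
    have hcne : Real.cos ((θ - π)/(n:ℝ)) ≠ 0 := ne_of_gt hc
    have h1 : HasDerivAt (fun θ:ℝ => (θ - π)/(n:ℝ)) (1/(n:ℝ)) θ := by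
      simpa using ((hasDerivAt_id θ).sub_const π).div_const (n:ℝ)
    have h2 : HasDerivAt (fun θ:ℝ => Real.cos ((θ - π)/(n:ℝ)))
        (-Real.sin ((θ-π)/(n:ℝ)) * (1/(n:ℝ))) θ := (Real.hasDerivAt_cos _).comp θ h1
    have h3 := h2.inv hcne
    have h4 := h3.pow n
    have h5 := h4.mul (Real.hasDerivAt_sin θ)
    refine h5.congr_deriv (Eq.symm ?_)
    have harg : (((n:ℝ)-1)*θ+π)/(n:ℝ) = θ - (θ-π)/(n:ℝ) := by field_simp; ring
    rw [harg, Real.cos_sub]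
    obtain ⟨k, rfl⟩ : ∃ k, n = k + 3 := ⟨n - 3, by omega⟩
    have hk1 : k + 3 - 1 = k + 2 := rfl
    rw [hk1]
    exact (aux_deriv_simp _ _ _ _ _ hcne hne0 k).symm
  -- θstar bounds
  have hθ0 : 0 ≤ θstar := by
    rw [hθdef]
    apply mul_nonneg (div_nonneg (by linarith) (by linarith)) (by linarith)
  have hθhalf : θstar ≤ π / 2 := by
    rw [hθdef]
    have h1 : ((n:ℝ)-2)/((n:ℝ)-1) ≤ 1 := by
      rw [div_le_one (by nlinarith)]; linarith
    nlinarith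
  have hθπ : θstar ≤ π := by linarith
  have hkey : ((n:ℝ)-1) * θstar = ((n:ℝ)-2) * (π/2) := by
    rw [hθdef]; field_simp
  have hmem : θstar ∈ Set.Icc (0:ℝ) π := ⟨hθ0, hθπ⟩
  -- monotone on [0, θstar]
  have hsub1 : Set.Icc (0:ℝ) θstar ⊆ Set.Icc 0 π := Set.Icc_subset_Icc le_rfl hθπ
  have hsub2 : Set.Icc θstar π ⊆ Set.Icc (0:ℝ) π := Set.Icc_subset_Icc hθ0 le_rfl
  have hmono : MonotoneOn f (Set.Icc 0 θstar) := by
    apply monotoneOn_of_deriv_nonneg (convex_Icc _ _)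
    · exact fun x hx => ((hderiv x (hsub1 hx)).continuousAt).continuousWithinAt
    · intro x hx
      rw [interior_Icc] at hx
      exact ((hderiv x (hsub1 (Set.Ioo_subset_Icc_self hx))).differentiableAt).differentiableWithinAt
    · intro x hx
      rw [interior_Icc] at hx
      have hx' : x ∈ Set.Icc (0:ℝ) π := hsub1 (Set.Ioo_subset_Icc_self hx)
      rw [(hderiv x hx').deriv]
      apply mul_nonneg (pow_nonneg (inv_nonneg.2 (hcos x hx').le) _)
      apply Real.cos_nonneg_of_mem_Icc
      constructor
      · have : 0 ≤ (((n:ℝ)-1)*x+π)/(n:ℝ) :=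
          div_nonneg (by nlinarith [hx.1]) (by linarith)
        linarith
      · rw [div_le_iff₀ hm0]
        have h2 : ((n:ℝ)-1)*x ≤ ((n:ℝ)-1)*θstar :=
          mul_le_mul_of_nonneg_left hx.2.le (by linarith)
        nlinarith
  have hanti : AntitoneOn f (Set.Icc θstar π) := by
    apply antitoneOn_of_deriv_nonpos (convex_Icc _ _)
    · exact fun x hx => ((hderiv x (hsub2 hx)).continuousAt).continuousWithinAt
    · intro x hx
      rw [interior_Icc] at hx
      exact ((hderiv x (hsub2 (Set.Ioo_subset_Icc_self hx))).differentiableAt).differentiableWithinAt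
    · intro x hx
      rw [interior_Icc] at hx
      have hx' : x ∈ Set.Icc (0:ℝ) π := hsub2 (Set.Ioo_subset_Icc_self hx)
      rw [(hderiv x hx').deriv]
      apply mul_nonpos_of_nonneg_of_nonpos (pow_nonneg (inv_nonneg.2 (hcos x hx').le) _)
      apply Real.cos_nonpos_of_pi_div_two_le_of_le
      · rw [le_div_iff₀ hm0]
        have h2 : ((n:ℝ)-1)*θstar ≤ ((n:ℝ)-1)*x :=
          mul_le_mul_of_nonneg_left hx.1.le (by linarith)
        nlinarith
      · rw [div_le_iff₀ hm0]
        have h2 : ((n:ℝ)-1)*x ≤ ((n:ℝ)-1)*π :=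
          mul_le_mul_of_nonneg_left hx.2.le (by linarith)
        nlinarith
  -- max
  have hmax : IsMaxOn f (Set.Icc 0 π) θstar := by
    rw [isMaxOn_iff]
    intro x hx
    rcases le_total x θstar with h | h
    · exact hmono ⟨hx.1, h⟩ ⟨hθ0, le_rfl⟩ h
    · exact hanti ⟨le_rfl, hθπ⟩ ⟨h, hx.2⟩ h
  -- value
  have e1 : (θstar - π)/(n:ℝ) = -(π / (2*((n:ℝ)-1))) := by
    rw [hθdef]; field_simp; ring
  have e2 : θstar = π/2 - π/(2*((n:ℝ)-1)) := by
    rw [hθdef]; field_simp; ring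
  have hcpos : (0:ℝ) < Real.cos (π / (2*((n:ℝ)-1))) := by
    apply Real.cos_pos_of_mem_Ioo
    constructor
    · have : 0 < π / (2*((n:ℝ)-1)) := div_pos hπ (by nlinarith)
      linarith
    · rw [div_lt_iff₀ (by nlinarith : (0:ℝ) < 2*((n:ℝ)-1))]
      nlinarith
  have hval : f θstar = ((Real.cos (π / (2 * ((n : ℝ) - 1))))⁻¹) ^ (n - 1) := by
    rw [hfdef, e1, Real.cos_neg]
    have e3 : Real.sin θstar = Real.cos (π / (2*((n:ℝ)-1))) := by
      rw [e2, Real.sin_pi_div_two_sub]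
    rw [e3]
    set c := Real.cos (π / (2*((n:ℝ)-1)))
    have hcne : c ≠ 0 := ne_of_gt hcpos
    obtain ⟨k, rfl⟩ : ∃ k, n = k + 3 := ⟨n - 3, by omega⟩
    have hk1 : k + 3 - 1 = k + 2 := rfl
    rw [hk1, pow_succ, mul_assoc, inv_mul_cancel₀ hcne, mul_one]
  exact ⟨hmem, hmax, hval, by rw [hval]⟩
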